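/- Let H be a 2n×2n complex Hermitian matrix with H² = 1 that anticommutes with Σ := fromBlocks(1ₙ, 0, 0, −1ₙ), i.e. Σ·H·Σ = −H. Then there exists an n×n unitary matrix q such that H = fromBlocks(0, q, q†, 0). -/
import Mathlib


open Matrix

/-- A flattened Hamiltonian (`Hᴴ = H`, `H² = 1`) anticommuting with
`Σ = fromBlocks 1 0 0 (−1)` is off-diagonal with a unitary upper-right block:
`H = fromBlocks 0 q qᴴ 0` for some unitary `q`. -/
theorem offdiag_block_form_of_chiral {n : ℕ}
    (H : Matrix (Fin n ⊕ Fin n) (Fin n ⊕ Fin n) ℂ)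
    (hH : Hᴴ = H)
    (hflat : H * H = 1)
    (hchi : (fromBlocks (1 : Matrix (Fin n) (Fin n) ℂ) 0 0 (-1)) * H *
        (fromBlocks (1 : Matrix (Fin n) (Fin n) ℂ) 0 0 (-1)) = -H) :
    ∃ q : Matrix (Fin n) (Fin n) ℂ,
      q * qᴴ = 1 ∧ qᴴ * q = 1 ∧ H = fromBlocks 0 q qᴴ 0 := by
  set A := H.toBlocks₁₁
  set B := H.toBlocks₁₂
  set C := H.toBlocks₂₁
  set D := H.toBlocks₂₂
  have hHb : H = fromBlocks A B C D := (fromBlocks_toBlocks H).symm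
  rw [hHb] at hchi hH hflat
  rw [fromBlocks_multiply, fromBlocks_multiply] at hchi
  simp only [Matrix.mul_one, Matrix.one_mul, Matrix.mul_zero, Matrix.zero_mul,
    add_zero, zero_add, Matrix.mul_neg, Matrix.neg_mul, neg_neg] at hchi
  have hA : A = 0 := by
    have := congrArg Matrix.toBlocks₁₁ hchi
    simp [toBlocks_fromBlocks₁₁, fromBlocks_neg, toBlocks_fromBlocks₁₁] at this
    have h2 : (2 : ℂ) • A = 0 := by
      rw [two_smul]; nth_rewrite 2 [this]; simp
    have := smul_eq_zero.mp h2
    rcases this with h | h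
    · norm_num at h
    · exact h
  have hD : D = 0 := by
    have := congrArg Matrix.toBlocks₂₂ hchi
    simp [fromBlocks_neg] at this
    have h2 : (2 : ℂ) • D = 0 := by
      rw [two_smul]; nth_rewrite 2 [this]; simp
    rcases smul_eq_zero.mp h2 with h | h
    · norm_num at h
    · exact h
  rw [fromBlocks_conjTranspose] at hH
  have hC : C = Bᴴ := by
    have := congrArg Matrix.toBlocks₂₁ hH
    simpa using this.symm
  rw [hA, hD, hC] at hHb hflat
  rw [fromBlocks_multiply] at hflat
  simp only [Matrix.mul_zero, Matrix.zero_mul, add_zero, zero_add] at hflat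
  refine ⟨B, ?_, ?_, hHb⟩
  · have := congrArg Matrix.toBlocks₁₁ hflat
    simpa [← fromBlocks_one] using this
  · have := congrArg Matrix.toBlocks₂₂ hflat
    simpa [← fromBlocks_one] using this
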